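/- Every star expression e (over 0, letters, +, ·, and binary star, without 1) is provably equal in BBP to the sum (Σ_{i=1}^m a_i) + (Σ_{j=1}^n b_j · e_j'), where {(a_1,√),...,(a_m,√),(b_1,e_1'),...,(b_n,e_n')} is an enumeration of the set of action derivatives of e, i.e., of all pairs (a,ξ) with e →a ξ derivable in the transition system (the 'fundamental theorem' of differential calculus for star expressions). -/

import Mathlib

/-- Star expressions over an alphabet `A` (without the constant 1, with binary Kleene star). -/
inductive StarExp (A : Type) : Type
  | zero : StarExp A
  | act : A → StarExp A
  | sum : StarExp A → StarExp A → StarExp A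
  | prod : StarExp A → StarExp A → StarExp A
  | star : StarExp A → StarExp A → StarExp A

namespace StarExp

/-- The star height of a star expression. -/
def height {A : Type} : StarExp A → ℕ
  | zero => 0
  | act _ => 0
  | sum e1 e2 => max e1.height e2.height
  | prod e1 e2 => max e1.height e2.height
  | star e1 e2 => max (e1.height + 1) e2.height

end StarExp
/-- The transition system of the process semantics: `Step e a ξ` means `e —a→ ξ`,
where `ξ` is either a star expression (`some e'`) or the termination symbol √ (`none`). -/
inductive Step {A : Type} : StarExp A → A → Option (StarExp A) → Prop
  | act (a : A) : Step (.act a) a none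
  | sum_left {e1 : StarExp A} {a : A} {ξ : Option (StarExp A)} (e2 : StarExp A) :
      Step e1 a ξ → Step (.sum e1 e2) a ξ
  | sum_right {e2 : StarExp A} {a : A} {ξ : Option (StarExp A)} (e1 : StarExp A) :
      Step e2 a ξ → Step (.sum e1 e2) a ξ
  | prod_left {e1 e1' : StarExp A} {a : A} (e2 : StarExp A) :
      Step e1 a (some e1') → Step (.prod e1 e2) a (some (.prod e1' e2))
  | prod_tick {e1 : StarExp A} {a : A} (e2 : StarExp A) :
      Step e1 a none → Step (.prod e1 e2) a (some e2)
  | star_left {e1 e1' : StarExp A} {a : A} (e2 : StarExp A) :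
      Step e1 a (some e1') → Step (.star e1 e2) a (some (.prod e1' (.star e1 e2)))
  | star_tick {e1 : StarExp A} {a : A} (e2 : StarExp A) :
      Step e1 a none → Step (.star e1 e2) a (some (.star e1 e2))
  | star_right {e2 : StarExp A} {a : A} {ξ : Option (StarExp A)} (e1 : StarExp A) :
      Step e2 a ξ → Step (.star e1 e2) a ξ

/-- Provable equality in the proof system BBP: equational logic together with the
axioms (B1)–(B7), (BKS1), (BKS2) and the fixed-point rule RSP*. -/
inductive BBP {A : Type} : StarExp A → StarExp A → Prop
  | refl (e : StarExp A) : BBP e e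
  | symm {e f : StarExp A} : BBP e f → BBP f e
  | trans {e f g : StarExp A} : BBP e f → BBP f g → BBP e g
  | sum_congr {e1 e2 f1 f2 : StarExp A} :
      BBP e1 f1 → BBP e2 f2 → BBP (.sum e1 e2) (.sum f1 f2)
  | prod_congr {e1 e2 f1 f2 : StarExp A} :
      BBP e1 f1 → BBP e2 f2 → BBP (.prod e1 e2) (.prod f1 f2)
  | star_congr {e1 e2 f1 f2 : StarExp A} :
      BBP e1 f1 → BBP e2 f2 → BBP (.star e1 e2) (.star f1 f2)
  | B1 (x y : StarExp A) : BBP (.sum x y) (.sum y x)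
  | B2 (x y z : StarExp A) : BBP (.sum (.sum x y) z) (.sum x (.sum y z))
  | B3 (x : StarExp A) : BBP (.sum x x) x
  | B4 (x y z : StarExp A) : BBP (.prod (.sum x y) z) (.sum (.prod x z) (.prod y z))
  | B5 (x y z : StarExp A) : BBP (.prod (.prod x y) z) (.prod x (.prod y z))
  | B6 (x : StarExp A) : BBP (.sum x .zero) x
  | B7 (x : StarExp A) : BBP (.prod .zero x) .zero
  | BKS1 (x y : StarExp A) : BBP (.sum (.prod x (.star x y)) y) (.star x y)
  | BKS2 (x y z : StarExp A) : BBP (.prod (.star x y) z) (.star x (.prod y z))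
  | RSP {x y z : StarExp A} : BBP x (.sum (.prod y x) z) → BBP x (.star y z)

/-- The sum `Σ_{i=1}^k e_i` of a list of star expressions: `0` for the empty list,
`e` for a singleton, and otherwise nested to the left. -/
def sumList {A : Type} : List (StarExp A) → StarExp A
  | [] => StarExp.zero
  | e :: es => es.foldl StarExp.sum e

section Aux

variable {A : Type}

open StarExp

/-- Canonical list of termination derivatives. -/
def ticks : StarExp A → List A
  | .zero => []
  | .act a => [a]
  | .sum e1 e2 => ticks e1 ++ ticks e2
  | .prod _ _ => []
  | .star _ e2 => ticks e2

/-- Canonical list of action derivatives. -/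
def ders : StarExp A → List (A × StarExp A)
  | .zero => []
  | .act _ => []
  | .sum e1 e2 => ders e1 ++ ders e2
  | .prod e1 e2 =>
      (ders e1).map (fun p => (p.1, StarExp.prod p.2 e2)) ++
      (ticks e1).map (fun a => (a, e2))
  | .star e1 e2 =>
      (ders e1).map (fun p => (p.1, StarExp.prod p.2 (StarExp.star e1 e2))) ++
      (ticks e1).map (fun a => (a, StarExp.star e1 e2)) ++ ders e2

theorem ticks_ders_spec (e : StarExp A) :
    (∀ a, a ∈ ticks e ↔ Step e a none) ∧
    (∀ p : A × StarExp A, p ∈ ders e ↔ Step e p.1 (some p.2)) := by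
  induction e with
  | zero =>
    constructor <;> intro x <;> constructor <;> rintro ⟨⟩
  | act a =>
    refine ⟨fun x => ⟨?_, ?_⟩, fun p => ⟨?_, ?_⟩⟩
    · intro h; simp [ticks] at h; subst h; exact Step.act _
    · intro h; cases h; simp [ticks]
    · rintro ⟨⟩
    · rintro ⟨⟩
  | sum e1 e2 ih1 ih2 =>
    refine ⟨fun x => ⟨?_, ?_⟩, fun p => ⟨?_, ?_⟩⟩
    · intro h
      rcases List.mem_append.1 h with h | h
      · exact .sum_left _ ((ih1.1 x).1 h)
      · exact .sum_right _ ((ih2.1 x).1 h)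
    · intro h
      cases h with
      | sum_left _ h => exact List.mem_append.2 (.inl ((ih1.1 x).2 h))
      | sum_right _ h => exact List.mem_append.2 (.inr ((ih2.1 x).2 h))
    · intro h
      rcases List.mem_append.1 h with h | h
      · exact .sum_left _ ((ih1.2 p).1 h)
      · exact .sum_right _ ((ih2.2 p).1 h)
    · intro h
      cases h with
      | sum_left _ h => exact List.mem_append.2 (.inl ((ih1.2 p).2 h))
      | sum_right _ h => exact List.mem_append.2 (.inr ((ih2.2 p).2 h))
  | prod e1 e2 ih1 ih2 =>
    refine ⟨fun x => ⟨?_, ?_⟩, fun p => ⟨?_, ?_⟩⟩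
    · rintro ⟨⟩
    · rintro ⟨⟩
    · intro h
      rcases List.mem_append.1 h with h | h
      · obtain ⟨q, hq, rfl⟩ := List.mem_map.1 h
        exact .prod_left _ ((ih1.2 q).1 hq)
      · obtain ⟨a, ha, rfl⟩ := List.mem_map.1 h
        exact .prod_tick _ ((ih1.1 a).1 ha)
    · obtain ⟨a, x⟩ := p
      intro h
      cases h with
      | prod_left _ h =>
        rename_i e1'
        exact List.mem_append.2 (.inl (List.mem_map.2 ⟨(a, e1'), (ih1.2 (a, e1')).2 h, rfl⟩))
      | prod_tick _ h =>
        exact List.mem_append.2 (.inr (List.mem_map.2 ⟨_, (ih1.1 _).2 h, rfl⟩))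
  | star e1 e2 ih1 ih2 =>
    refine ⟨fun x => ⟨?_, ?_⟩, fun p => ⟨?_, ?_⟩⟩
    · intro h; exact .star_right _ ((ih2.1 x).1 h)
    · intro h
      cases h with
      | star_right _ h => exact (ih2.1 x).2 h
    · intro h
      rcases List.mem_append.1 h with h | h
      · rcases List.mem_append.1 h with h | h
        · obtain ⟨q, hq, rfl⟩ := List.mem_map.1 h
          exact .star_left _ ((ih1.2 q).1 hq)
        · obtain ⟨a, ha, rfl⟩ := List.mem_map.1 h
          exact .star_tick _ ((ih1.1 a).1 ha)
      · exact .star_right _ ((ih2.2 p).1 h)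
    · obtain ⟨a, x⟩ := p
      intro h
      cases h with
      | star_left _ h =>
        rename_i e1'
        exact List.mem_append.2 (.inl (List.mem_append.2
          (.inl (List.mem_map.2 ⟨(a, e1'), (ih1.2 (a, e1')).2 h, rfl⟩))))
      | star_tick _ h =>
        exact List.mem_append.2 (.inl (List.mem_append.2
          (.inr (List.mem_map.2 ⟨_, (ih1.1 _).2 h, rfl⟩))))
      | star_right _ h =>
        exact List.mem_append.2 (.inr ((ih2.2 _).2 h))

theorem bbp_foldl_congr {s t : StarExp A} (h : BBP s t) :
    ∀ l : List (StarExp A), BBP (l.foldl StarExp.sum s) (l.foldl StarExp.sum t) := by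
  intro l
  induction l generalizing s t with
  | nil => exact h
  | cons c l ih => exact ih (BBP.sum_congr h (BBP.refl c))

theorem bbp_foldl_sum (a : StarExp A) :
    ∀ (b : StarExp A) (l : List (StarExp A)),
      BBP (l.foldl StarExp.sum (StarExp.sum a b)) (StarExp.sum a (l.foldl StarExp.sum b)) := by
  intro b l
  induction l generalizing b with
  | nil => exact BBP.refl _
  | cons c l ih =>
    exact BBP.trans (bbp_foldl_congr (BBP.B2 a b c) l) (ih (StarExp.sum b c))

theorem sumList_cons (x : StarExp A) (xs : List (StarExp A)) :
    BBP (sumList (x :: xs)) (StarExp.sum x (sumList xs)) := by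
  cases xs with
  | nil => exact BBP.symm (BBP.B6 x)
  | cons y ys => exact bbp_foldl_sum x y ys

theorem sum_zero_left (s : StarExp A) : BBP (StarExp.sum .zero s) s :=
  BBP.trans (BBP.B1 _ _) (BBP.B6 _)

theorem sumList_append (xs ys : List (StarExp A)) :
    BBP (sumList (xs ++ ys)) (StarExp.sum (sumList xs) (sumList ys)) := by
  induction xs with
  | nil => exact BBP.symm (sum_zero_left _)
  | cons x xs ih =>
    exact BBP.trans (sumList_cons _ _)
      (BBP.trans (BBP.sum_congr (BBP.refl _) ih)
        (BBP.trans (BBP.symm (BBP.B2 _ _ _))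
          (BBP.sum_congr (BBP.symm (sumList_cons _ _)) (BBP.refl _))))

theorem bbp_absorb {x : StarExp A} {ys : List (StarExp A)} (h : x ∈ ys) :
    BBP (StarExp.sum x (sumList ys)) (sumList ys) := by
  induction ys with
  | nil => cases h
  | cons y ys ih =>
    have hc := sumList_cons y ys
    rcases List.mem_cons.1 h with rfl | h
    · exact BBP.trans (BBP.sum_congr (BBP.refl _) hc)
        (BBP.trans (BBP.symm (BBP.B2 _ _ _))
          (BBP.trans (BBP.sum_congr (BBP.B3 _) (BBP.refl _)) (BBP.symm hc)))
    · exact BBP.trans (BBP.sum_congr (BBP.refl _) hc)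
        (BBP.trans (BBP.symm (BBP.B2 _ _ _))
          (BBP.trans (BBP.sum_congr (BBP.B1 _ _) (BBP.refl _))
            (BBP.trans (BBP.B2 _ _ _)
              (BBP.trans (BBP.sum_congr (BBP.refl _) (ih h)) (BBP.symm hc)))))

theorem bbp_subset {xs ys : List (StarExp A)} (h : ∀ x ∈ xs, x ∈ ys) :
    BBP (StarExp.sum (sumList xs) (sumList ys)) (sumList ys) := by
  induction xs with
  | nil => exact sum_zero_left _
  | cons x xs ih =>
    exact BBP.trans (BBP.sum_congr (sumList_cons _ _) (BBP.refl _))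
      (BBP.trans (BBP.B2 _ _ _)
        (BBP.trans (BBP.sum_congr (BBP.refl _) (ih fun a ha => h a (List.mem_cons_of_mem _ ha)))
          (bbp_absorb (h x List.mem_cons_self))))

theorem sumList_equiv {xs ys : List (StarExp A)} (h : ∀ x, x ∈ xs ↔ x ∈ ys) :
    BBP (sumList xs) (sumList ys) := by
  have h1 := bbp_subset (fun x hx => (h x).1 hx)
  have h2 := bbp_subset (fun x hx => (h x).2 hx)
  exact BBP.trans (BBP.symm h2) (BBP.trans (BBP.B1 _ _) h1)

theorem sumList_prod (xs : List (StarExp A)) (z : StarExp A) :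
    BBP (StarExp.prod (sumList xs) z) (sumList (xs.map (fun x => StarExp.prod x z))) := by
  induction xs with
  | nil => exact BBP.B7 z
  | cons x xs ih =>
    exact BBP.trans (BBP.prod_congr (sumList_cons _ _) (BBP.refl _))
      (BBP.trans (BBP.B4 _ _ _)
        (BBP.trans (BBP.sum_congr (BBP.refl _) ih) (BBP.symm (sumList_cons _ _))))

theorem sumList_map_bbp {α : Type} (l : List α) (f g : α → StarExp A)
    (h : ∀ x, BBP (f x) (g x)) :
    BBP (sumList (l.map f)) (sumList (l.map g)) := by
  induction l with
  | nil => exact BBP.refl _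
  | cons x l ih =>
    exact BBP.trans (sumList_cons _ _)
      (BBP.trans (BBP.sum_congr (h x) ih) (BBP.symm (sumList_cons _ _)))

/-- The canonical derivative sum of a star expression. -/
def dsum (e : StarExp A) : StarExp A :=
  sumList ((ticks e).map StarExp.act ++
    (ders e).map (fun p => StarExp.prod (StarExp.act p.1) p.2))

theorem prod_expand (e z : StarExp A) (h : BBP e (dsum e)) :
    BBP (StarExp.prod e z)
      (sumList ((ticks e).map (fun a => StarExp.prod (StarExp.act a) z) ++
        (ders e).map (fun p => StarExp.prod (StarExp.act p.1) (StarExp.prod p.2 z)))) := by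
  have h1 : BBP (StarExp.prod e z)
      (StarExp.sum
        (StarExp.prod (sumList ((ticks e).map StarExp.act)) z)
        (StarExp.prod (sumList ((ders e).map (fun p => StarExp.prod (StarExp.act p.1) p.2))) z)) :=
    BBP.trans (BBP.prod_congr (BBP.trans h (sumList_append _ _)) (BBP.refl _)) (BBP.B4 _ _ _)
  have hT : BBP (StarExp.prod (sumList ((ticks e).map StarExp.act)) z)
      (sumList ((ticks e).map (fun a => StarExp.prod (StarExp.act a) z))) := by
    refine BBP.trans (sumList_prod _ _) ?_
    rw [List.map_map]
    exact sumList_map_bbp _ _ _ (fun a => BBP.refl _)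
  have hD : BBP
      (StarExp.prod (sumList ((ders e).map (fun p => StarExp.prod (StarExp.act p.1) p.2))) z)
      (sumList ((ders e).map (fun p => StarExp.prod (StarExp.act p.1) (StarExp.prod p.2 z)))) := by
    refine BBP.trans (sumList_prod _ _) ?_
    rw [List.map_map]
    exact sumList_map_bbp _ _ _ (fun p => BBP.B5 _ _ _)
  exact BBP.trans h1 (BBP.trans (BBP.sum_congr hT hD) (BBP.symm (sumList_append _ _)))

theorem bbp_dsum (e : StarExp A) : BBP e (dsum e) := by
  induction e with
  | zero => exact BBP.refl _
  | act a => exact BBP.refl _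
  | sum e1 e2 ih1 ih2 =>
    refine BBP.trans (BBP.sum_congr ih1 ih2) ?_
    refine BBP.trans (BBP.symm (sumList_append _ _)) ?_
    refine sumList_equiv ?_
    intro x
    simp only [dsum, ticks, ders, List.mem_append, List.mem_map, List.map_append]
    aesop
  | prod e1 e2 ih1 ih2 =>
    refine BBP.trans (prod_expand e1 e2 ih1) ?_
    refine sumList_equiv ?_
    intro x
    simp only [dsum, ticks, ders, List.mem_append, List.mem_map, List.map_append,
      List.map_map, Function.comp, List.map_nil, List.not_mem_nil, false_or]
    aesop
  | star e1 e2 ih1 ih2 =>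
    refine BBP.trans (BBP.symm (BBP.BKS1 e1 e2)) ?_
    refine BBP.trans (BBP.sum_congr (prod_expand e1 (StarExp.star e1 e2) ih1) ih2) ?_
    refine BBP.trans (BBP.symm (sumList_append _ _)) ?_
    refine sumList_equiv ?_
    intro x
    simp only [dsum, ticks, ders, List.mem_append, List.mem_map, List.map_append,
      List.map_map, Function.comp]
    aesop

end Aux

/-- The fundamental theorem of differential calculus for star expressions: the set
of action derivatives of any star expression `e` can be enumerated by finite lists
`as` (the pairs `(a,√)`) and `bs` (the pairs `(b,e')`), and for any such
enumeration `e` is provably equal in BBP to `(Σ_{i=1}^m a_i) + (Σ_{j=1}^n b_j · e_j')`. -/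
theorem fundamental_theorem {A : Type} (e : StarExp A) :
    (∃ (as : List A) (bs : List (A × StarExp A)),
        (∀ a : A, a ∈ as ↔ Step e a none) ∧
        (∀ p : A × StarExp A, p ∈ bs ↔ Step e p.1 (some p.2))) ∧
    (∀ (as : List A) (bs : List (A × StarExp A)),
        (∀ a : A, a ∈ as ↔ Step e a none) →
        (∀ p : A × StarExp A, p ∈ bs ↔ Step e p.1 (some p.2)) →
        BBP e (StarExp.sum (sumList (as.map StarExp.act))
          (sumList (bs.map fun p => StarExp.prod (StarExp.act p.1) p.2)))) := by
  constructor
  · exact ⟨ticks e, ders e, (ticks_ders_spec e).1, (ticks_ders_spec e).2⟩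
  · intro as bs has hbs
    have h1 : BBP (sumList (as.map StarExp.act)) (sumList ((ticks e).map StarExp.act)) := by
      refine sumList_equiv ?_
      intro x
      simp only [List.mem_map]
      constructor
      · rintro ⟨a, ha, rfl⟩
        exact ⟨a, ((ticks_ders_spec e).1 a).2 ((has a).1 ha), rfl⟩
      · rintro ⟨a, ha, rfl⟩
        exact ⟨a, (has a).2 (((ticks_ders_spec e).1 a).1 ha), rfl⟩
    have h2 : BBP (sumList (bs.map fun p => StarExp.prod (StarExp.act p.1) p.2))
        (sumList ((ders e).map fun p => StarExp.prod (StarExp.act p.1) p.2)) := by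
      refine sumList_equiv ?_
      intro x
      simp only [List.mem_map]
      constructor
      · rintro ⟨p, hp, rfl⟩
        exact ⟨p, ((ticks_ders_spec e).2 p).2 ((hbs p).1 hp), rfl⟩
      · rintro ⟨p, hp, rfl⟩
        exact ⟨p, (hbs p).2 (((ticks_ders_spec e).2 p).1 hp), rfl⟩
    exact BBP.trans (bbp_dsum e)
      (BBP.trans (sumList_append _ _) (BBP.sum_congr (BBP.symm h1) (BBP.symm h2)))
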